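/- arXiv:cs/0509058 — 7 statements merged into one kernel-verified Lean document; each statement's English description precedes it below -/
import Mathlib

section
/- In a partitional awareness structure (i.e., each possibility correspondence K_i is reflexive, transitive, and Euclidean) where awareness is generated by primitive propositions, for every agent i, every state s, and every formula φ: (M,s) ⊨ A_i φ if and only if (M,s) ⊨ X_i φ ∨ (¬X_i φ ∧ X_i ¬X_i φ), where X_i φ is defined as A_i φ ∧ K_i φ. -/
/-! Language with knowledge `K`, explicit knowledge `X`, and awareness `A`. -/
inductive AForm (α : Type) (n : ℕ) : Type
  | top : AForm α n
  | prim (p : α) : AForm α n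
  | neg (φ : AForm α n) : AForm α n
  | and (φ ψ : AForm α n) : AForm α n
  | K (i : Fin n) (φ : AForm α n) : AForm α n
  | X (i : Fin n) (φ : AForm α n) : AForm α n
  | A (i : Fin n) (φ : AForm α n) : AForm α n

namespace AForm

def prims {α : Type} {n : ℕ} : AForm α n → Set α
  | top => ∅
  | prim p => {p}
  | neg φ => prims φ
  | and φ ψ => prims φ ∪ prims ψ
  | K _ φ => prims φ
  | X _ φ => prims φ
  | A _ φ => prims φ

/-- `φ ∨ ψ` as an abbreviation of `¬(¬φ ∧ ¬ψ)`. -/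
def orF {α : Type} {n : ℕ} (a b : AForm α n) : AForm α n := neg (and (neg a) (neg b))

end AForm

/-- An awareness structure for `n` agents over primitive propositions `α`. -/
structure AwStruct (α : Type) (n : ℕ) where
  State : Type
  pi : State → α → Bool
  k : Fin n → State → Set State
  aw : Fin n → State → Set (AForm α n)

/-- Standard (2-valued) satisfaction; `X_i φ` is `A_i φ ∧ K_i φ`. -/
def AwStruct.sat {α : Type} {n : ℕ} (M : AwStruct α n) : AForm α n → M.State → Prop
  | .top => fun _ => True
  | .prim p => fun s => M.pi s p = true
  | .neg φ => fun s => ¬ AwStruct.sat M φ s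
  | .and φ ψ => fun s => AwStruct.sat M φ s ∧ AwStruct.sat M ψ s
  | .K i φ => fun s => ∀ t ∈ M.k i s, AwStruct.sat M φ t
  | .X i φ => fun s => φ ∈ M.aw i s ∧ ∀ t ∈ M.k i s, AwStruct.sat M φ t
  | .A i φ => fun s => φ ∈ M.aw i s

/-- In a partitional awareness structure where awareness is generated by primitive
propositions, `A_i φ` is equivalent to `X_i φ ∨ (¬X_i φ ∧ X_i ¬X_i φ)`. -/
theorem awareness_definable {α : Type} {n : ℕ} (M : AwStruct α n)
    (hrefl : ∀ (i : Fin n) (s : M.State), s ∈ M.k i s)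
    (htrans : ∀ (i : Fin n) (s t : M.State), t ∈ M.k i s → M.k i t ⊆ M.k i s)
    (heucl : ∀ (i : Fin n) (s t : M.State), t ∈ M.k i s → M.k i s ⊆ M.k i t)
    (hpg : ∀ (i : Fin n) (s : M.State) (φ : AForm α n),
      φ ∈ M.aw i s ↔ ∀ p ∈ φ.prims, AForm.prim p ∈ M.aw i s)
    (i : Fin n) (s : M.State) (φ : AForm α n) :
    M.sat (AForm.A i φ) s ↔
      M.sat (AForm.orF (AForm.X i φ)
        (AForm.and (AForm.neg (AForm.X i φ)) (AForm.X i (AForm.neg (AForm.X i φ))))) s := by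
  simp only [AwStruct.sat, AForm.orF, AForm.prims]
  constructor
  · intro hA
    by_cases hX : φ ∈ M.aw i s ∧ ∀ t ∈ M.k i s, M.sat φ t
    · intro h; exact h.1 hX
    · intro h
      refine h.2 ⟨hX, ?_, ?_⟩
      · rw [hpg]; intro p hp; exact (hpg i s φ).mp hA p hp
      · intro t ht hXt
        push_neg at hX
        obtain ⟨u, hu, hnu⟩ := hX hA
        exact hnu (hXt.2 u (heucl i s t ht hu))
  · intro h
    by_contra hA
    apply h
    refine ⟨fun hX => hA hX.1, fun h' => hA ?_⟩
    rw [hpg]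
    intro p hp
    exact (hpg i s _).mp h'.2.1 p hp
end

section
/- In any HMS structure, if Ψ ⊆ Ψ', then every formula of the language L^{K,↪}_n(Ψ) (built from primitive propositions in Ψ using ¬, ∧, ↪, and K_1,…,K_n) is defined (true or false) at every state in S_{Ψ'}. -/
inductive Form (α : Type) (n : ℕ) : Type
  | top : Form α n
  | prim (p : α) : Form α n
  | neg (φ : Form α n) : Form α n
  | and (φ ψ : Form α n) : Form α n
  | imp (φ ψ : Form α n) : Form α n
  | know (i : Fin n) (φ : Form α n) : Form α n

namespace Form

/-- The set of primitive propositions occurring in a formula. -/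
def prims {α : Type} {n : ℕ} : Form α n → Set α
  | top => ∅
  | prim p => {p}
  | neg φ => prims φ
  | and φ ψ => prims φ ∪ prims ψ
  | imp φ ψ => prims φ ∪ prims ψ
  | know _ φ => prims φ

/-- Formulas of `L^K_n` : no occurrence of the nonstandard implication `↪`. -/
def ImpFree {α : Type} {n : ℕ} : Form α n → Prop
  | top => True
  | prim _ => True
  | neg φ => ImpFree φ
  | and φ ψ => ImpFree φ ∧ ImpFree ψ
  | imp _ _ => False
  | know _ φ => ImpFree φ

end Form

/-- `φ = 1` abbreviates `¬(φ ↪ ¬⊤)`. -/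
def eqOne {α : Type} {n : ℕ} (φ : Form α n) : Form α n := .neg (.imp φ (.neg .top))
/-- `φ = 0` abbreviates `¬(¬φ ↪ ¬⊤)`. -/
def eqZero {α : Type} {n : ℕ} (φ : Form α n) : Form α n := .neg (.imp (.neg φ) (.neg .top))
/-- `φ = 1/2` abbreviates `(φ ↪ ¬⊤) ∧ (¬φ ↪ ¬⊤)`. -/
def eqHalf {α : Type} {n : ℕ} (φ : Form α n) : Form α n :=
  .and (.imp φ (.neg .top)) (.imp (.neg φ) (.neg .top))
/-- `φ ⇌ ψ` abbreviates `(φ ↪ ψ) ∧ (ψ ↪ φ)`. -/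
def biimp {α : Type} {n : ℕ} (a b : Form α n) : Form α n := .and (.imp a b) (.imp b a)
/-- `φ ∨ ψ` abbreviates `¬(¬φ ∧ ¬ψ)`. -/
def orF {α : Type} {n : ℕ} (a b : Form α n) : Form α n := .neg (.and (.neg a) (.neg b))

/-- An HMS structure for `n` agents over the set `α` of primitive propositions.
States are partitioned into spaces `S_Ψ` (recorded by `space`); `pi s p = none`
means `p` is undefined (value 1/2) at `s`; `proj s Ψ` is the projection
`ρ_{space s, Ψ} s`, meaningful when `Ψ ⊆ space s`. -/
structure HMS (α : Type) (n : ℕ) where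
  State : Type
  space : State → Set α
  pi : State → α → Option Bool
  pi_def : ∀ s p, (pi s p).isSome ↔ p ∈ space s
  k : Fin n → State → Set State
  proj : State → Set α → State
  proj_space : ∀ s Ψ, Ψ ⊆ space s → space (proj s Ψ) = Ψ
  proj_pi : ∀ s Ψ p, Ψ ⊆ space s → p ∈ Ψ → pi (proj s Ψ) p = pi s p
  proj_comp : ∀ s Ψ Ψ', Ψ ⊆ Ψ' → Ψ' ⊆ space s → proj (proj s Ψ') Ψ = proj s Ψ
  proj_surj : ∀ (t : State) (Ψ' : Set α), space t ⊆ Ψ' →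
    ∃ s, space s = Ψ' ∧ proj s (space t) = t

namespace HMS

/-- 3-valued satisfaction: `(satp M φ s).1` is "φ is true at s",
`(satp M φ s).2` is "¬φ is true at s" (i.e. φ is false at s). -/
def satp {α : Type} {n : ℕ} (M : HMS α n) : Form α n → M.State → Prop × Prop
  | .top => fun _ => (True, False)
  | .prim p => fun s => (M.pi s p = some true, M.pi s p = some false)
  | .neg φ => fun s => ((satp M φ s).2, (satp M φ s).1)
  | .and φ ψ => fun s =>
      ((satp M φ s).1 ∧ (satp M ψ s).1,
       ((satp M φ s).2 ∧ (satp M ψ s).1) ∨ ((satp M φ s).1 ∧ (satp M ψ s).2) ∨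
         ((satp M φ s).2 ∧ (satp M ψ s).2))
  | .imp φ ψ => fun s =>
      (((satp M φ s).1 ∧ (satp M ψ s).1) ∨ (¬ (satp M φ s).1 ∧ ¬ (satp M φ s).2) ∨
         ((satp M φ s).2 ∧ ((satp M ψ s).1 ∨ (satp M ψ s).2)),
       (satp M φ s).1 ∧ (satp M ψ s).2)
  | .know i φ => fun s =>
      (((satp M φ s).1 ∨ (satp M φ s).2) ∧ ∀ t ∈ M.k i s, (satp M φ t).1,
       ((satp M φ s).1 ∨ (satp M φ s).2) ∧
         ¬ (((satp M φ s).1 ∨ (satp M φ s).2) ∧ ∀ t ∈ M.k i s, (satp M φ t).1))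

/-- `(M,s) ⊨ φ`. -/
def Sat {α : Type} {n : ℕ} (M : HMS α n) (s : M.State) (φ : Form α n) : Prop :=
  (satp M φ s).1
/-- `(M,s) ⊨ ¬φ`. -/
def SatN {α : Type} {n : ℕ} (M : HMS α n) (s : M.State) (φ : Form α n) : Prop :=
  (satp M φ s).2
/-- `φ` is defined (true or false) at `s`. -/
def Defined {α : Type} {n : ℕ} (M : HMS α n) (s : M.State) (φ : Form α n) : Prop :=
  M.Sat s φ ∨ M.SatN s φ

/-- `⟦φ⟧_M`, the set of states where `φ` is true. -/
def truthSet {α : Type} {n : ℕ} (M : HMS α n) (φ : Form α n) : Set M.State :=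
  {s | M.Sat s φ}

/-- Confinedness: if `s ∈ S_Ψ` then `K_i(s) ⊆ S_{Ψ'}` for some `Ψ' ⊆ Ψ`. -/
def Confined {α : Type} {n : ℕ} (M : HMS α n) : Prop :=
  ∀ (i : Fin n) (s : M.State), ∃ Ψ', Ψ' ⊆ M.space s ∧ ∀ t ∈ M.k i s, M.space t = Ψ'

/-- `(K_i(s))^↑`, the states in which (some member of) `K_i(s)` is expressible:
`x ∈ (K_i(s))^↑` iff some `t ∈ K_i(s)` lies in a space `⊆ space x` and `x` projects to `t`. -/
def kUp {α : Type} {n : ℕ} (M : HMS α n) (i : Fin n) (s : M.State) : Set M.State :=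
  {x | ∃ t ∈ M.k i s, M.space t ⊆ M.space x ∧ M.proj x (M.space t) = t}

/-- Generalized reflexivity (`r`): `s ∈ (K_i(s))^↑`. -/
def GenRefl {α : Type} {n : ℕ} (M : HMS α n) : Prop :=
  ∀ (i : Fin n) (s : M.State), s ∈ M.kUp i s
/-- Stationarity, part (a) (`t`): `s' ∈ K_i(s)` implies `K_i(s') ⊆ K_i(s)`. -/
def StatA {α : Type} {n : ℕ} (M : HMS α n) : Prop :=
  ∀ (i : Fin n) (s s' : M.State), s' ∈ M.k i s → M.k i s' ⊆ M.k i s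
/-- Stationarity, part (b) (`e`): `s' ∈ K_i(s)` implies `K_i(s') ⊇ K_i(s)`. -/
def StatB {α : Type} {n : ℕ} (M : HMS α n) : Prop :=
  ∀ (i : Fin n) (s s' : M.State), s' ∈ M.k i s → M.k i s ⊆ M.k i s'
/-- Projections preserve knowledge. -/
def ProjKnow {α : Type} {n : ℕ} (M : HMS α n) : Prop :=
  ∀ (i : Fin n) (s : M.State) (Ψ1 Ψ2 : Set α), Ψ1 ⊆ Ψ2 → Ψ2 ⊆ M.space s →
    (∀ t ∈ M.k i s, M.space t = Ψ2) →
    (fun t => M.proj t Ψ1) '' M.k i s = M.k i (M.proj s Ψ1)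
/-- Projections preserve ignorance. -/
def ProjIgn {α : Type} {n : ℕ} (M : HMS α n) : Prop :=
  ∀ (i : Fin n) (s : M.State) (Ψ : Set α), Ψ ⊆ M.space s →
    M.kUp i s ⊆ M.kUp i (M.proj s Ψ)

end HMS

/-- If `Ψ ⊆ Ψ'`, every formula of `L^{K,↪}_n(Ψ)` is defined at every state of `S_{Ψ'}`. -/
theorem defined_on_larger_space {α : Type} {n : ℕ} (M : HMS α n) (hconf : M.Confined)
    (Ψ Ψ' : Set α) (hΨ : Ψ ⊆ Ψ') (φ : Form α n) (hφ : φ.prims ⊆ Ψ)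
    (s : M.State) (hs : M.space s = Ψ') :
    M.Defined s φ := by
  have hΨs : Ψ ⊆ M.space s := by rw [hs]; exact hΨ
  clear hs hΨ hconf
  induction φ with
  | top => exact Or.inl trivial
  | prim p =>
    have hp : p ∈ M.space s := hΨs (hφ rfl)
    have := (M.pi_def s p).mpr hp
    rcases Option.isSome_iff_exists.mp this with ⟨b, hb⟩
    cases b
    · exact Or.inr hb
    · exact Or.inl hb
  | neg φ ih => exact (ih hφ).symm.imp id id
  | and φ ψ ihφ ihψ =>
    have h1 := ihφ (fun p hp => hφ (Or.inl hp))
    have h2 := ihψ (fun p hp => hφ (Or.inr hp))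
    rcases h1 with h1 | h1 <;> rcases h2 with h2 | h2
    · exact Or.inl ⟨h1, h2⟩
    · exact Or.inr (Or.inr (Or.inl ⟨h1, h2⟩))
    · exact Or.inr (Or.inl ⟨h1, h2⟩)
    · exact Or.inr (Or.inr (Or.inr ⟨h1, h2⟩))
  | imp φ ψ ihφ ihψ =>
    have h1 := ihφ (fun p hp => hφ (Or.inl hp))
    have h2 := ihψ (fun p hp => hφ (Or.inr hp))
    rcases h1 with h1 | h1
    · rcases h2 with h2 | h2
      · exact Or.inl (Or.inl ⟨h1, h2⟩)
      · exact Or.inr ⟨h1, h2⟩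
    · exact Or.inl (Or.inr (Or.inr ⟨h1, h2⟩))
  | know i φ ih =>
    have h := ih hφ
    by_cases hA : ((M.satp φ s).1 ∨ (M.satp φ s).2) ∧ ∀ t ∈ M.k i s, (M.satp φ t).1
    · exact Or.inl hA
    · exact Or.inr ⟨h, hA⟩
end

section
/- In any HMS structure M, if Ψ' ⊆ Ψ ⊆ Φ, s ∈ S_Ψ, s' = ρ_{Ψ,Ψ'}(s), and φ ∈ L^K_n(Φ) satisfies (M,s') ⊨ φ, then (M,s) ⊨ φ. -/
section Aux

variable {α : Type} {n : ℕ} (M : HMS α n)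

/-- Every state is a fixed point of projection to its own space. -/
lemma proj_self (t : M.State) : M.proj t (M.space t) = t := by
  obtain ⟨s0, hsp, hpr⟩ := M.proj_surj t (M.space t) (subset_refl _)
  have h := M.proj_comp s0 (M.space t) (M.space t) (subset_refl _) (by rw [hsp])
  rw [hpr] at h
  exact h

/-- A formula can't be both true and false at a state. -/
lemma satp_consistent (φ : Form α n) : ∀ x : M.State, ¬ ((M.satp φ x).1 ∧ (M.satp φ x).2) := by
  induction φ with
  | top => intro x; simp [HMS.satp]
  | prim p =>
      intro x
      rintro ⟨h1, h2⟩
      simp only [HMS.satp] at h1 h2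
      rw [h1] at h2
      simp at h2
  | neg φ ih =>
      intro x
      rintro ⟨h1, h2⟩
      exact ih x ⟨h2, h1⟩
  | and φ ψ ihφ ihψ =>
      intro x
      simp only [HMS.satp]
      have h1 := ihφ x
      have h2 := ihψ x
      tauto
  | imp φ ψ ihφ ihψ =>
      intro x
      simp only [HMS.satp]
      have h1 := ihφ x
      have h2 := ihψ x
      tauto
  | know i φ ih =>
      intro x
      simp only [HMS.satp]
      tauto

/-- An `↪`-free formula is defined at `x` iff its primitives are in `space x`. -/
lemma defined_iff (φ : Form α n) (hφ : φ.ImpFree) :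
    ∀ x : M.State, ((M.satp φ x).1 ∨ (M.satp φ x).2) ↔ φ.prims ⊆ M.space x := by
  induction φ with
  | top =>
      intro x
      simp [HMS.satp, Form.prims]
  | prim p =>
      intro x
      simp only [HMS.satp, Form.prims, Set.singleton_subset_iff]
      rw [← M.pi_def]
      constructor
      · rintro (h | h) <;> simp [h]
      · intro h
        obtain ⟨b, hb⟩ := Option.isSome_iff_exists.mp h
        cases b
        · right; exact hb
        · left; exact hb
  | neg φ ih =>
      intro x
      rw [show (Form.neg φ).prims = φ.prims from rfl, ← ih hφ x]
      simp only [HMS.satp]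
      tauto
  | and φ ψ ihφ ihψ =>
      intro x
      obtain ⟨hφ1, hφ2⟩ := hφ
      rw [show (Form.and φ ψ).prims = φ.prims ∪ ψ.prims from rfl, Set.union_subset_iff,
        ← ihφ hφ1 x, ← ihψ hφ2 x]
      simp only [HMS.satp]
      tauto
  | imp φ ψ ihφ ihψ => exact absurd hφ id
  | know i φ ih =>
      intro x
      rw [show (Form.know i φ).prims = φ.prims from rfl, ← ih hφ x]
      simp only [HMS.satp]
      tauto

/-- Main monotonicity lemma, both polarities simultaneously. -/
lemma satp_mono (hconf : M.Confined) (hpk : M.ProjKnow) (hpi : M.ProjIgn)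
    (φ : Form α n) (hφ : φ.ImpFree) :
    ∀ (s : M.State) (Ψ' : Set α), Ψ' ⊆ M.space s →
      ((M.satp φ (M.proj s Ψ')).1 → (M.satp φ s).1) ∧
      ((M.satp φ (M.proj s Ψ')).2 → (M.satp φ s).2) := by
  induction φ with
  | top => intro s Ψ' _; simp [HMS.satp]
  | prim p =>
      intro s Ψ' hsub
      have key : ∀ b : Bool, M.pi (M.proj s Ψ') p = some b → M.pi s p = some b := by
        intro b hb
        have hmem : p ∈ Ψ' := by
          have : (M.pi (M.proj s Ψ') p).isSome := by simp [hb]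
          rw [M.pi_def, M.proj_space s Ψ' hsub] at this
          exact this
        rw [← M.proj_pi s Ψ' p hsub hmem]
        exact hb
      exact ⟨key true, key false⟩
  | neg φ ih =>
      intro s Ψ' hsub
      have h := ih hφ s Ψ' hsub
      exact ⟨h.2, h.1⟩
  | and φ ψ ihφ ihψ =>
      intro s Ψ' hsub
      obtain ⟨hφ1, hφ2⟩ := hφ
      have h1 := ihφ hφ1 s Ψ' hsub
      have h2 := ihψ hφ2 s Ψ' hsub
      simp only [HMS.satp]
      tauto
  | imp φ ψ ihφ ihψ => exact absurd hφ id
  | know i φ ih =>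
      intro s Ψ' hsub
      have hs'sp : M.space (M.proj s Ψ') = Ψ' := M.proj_space s Ψ' hsub
      -- definedness transfers
      have hDtrans : ((M.satp φ (M.proj s Ψ')).1 ∨ (M.satp φ (M.proj s Ψ')).2) →
          ((M.satp φ s).1 ∨ (M.satp φ s).2) := by
        rintro (h | h)
        · exact Or.inl ((ih hφ s Ψ' hsub).1 h)
        · exact Or.inr ((ih hφ s Ψ' hsub).2 h)
      -- truth of φ at all of k i s, from truth at all of k i (proj s Ψ')
      have hAllTrans : (∀ t' ∈ M.k i (M.proj s Ψ'), (M.satp φ t').1) →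
          ∀ t ∈ M.k i s, (M.satp φ t).1 := by
        intro hAll t ht
        have htUp : t ∈ M.kUp i s := ⟨t, ht, subset_refl _, proj_self M t⟩
        obtain ⟨u, hu, husub, hueq⟩ := hpi i s Ψ' hsub htUp
        have h := (ih hφ t (M.space u) husub).1
        rw [hueq] at h
        exact h (hAll u hu)
      constructor
      · rintro ⟨hD, hAll⟩
        exact ⟨hDtrans hD, hAllTrans hAll⟩
      · rintro ⟨hD, hn⟩
        refine ⟨hDtrans hD, ?_⟩
        rintro ⟨hDs, hAll⟩
        apply hn
        refine ⟨hD, ?_⟩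
        -- show every element of k i (proj s Ψ') satisfies φ
        intro t' ht'
        obtain ⟨Ψ2, hΨ2sub, hΨ2⟩ := hconf i s
        by_cases hne : (M.k i s).Nonempty
        · obtain ⟨t0, ht0⟩ := hne
          obtain ⟨Ψ1', hΨ1'sub, hΨ1'⟩ := hconf i (M.proj s Ψ')
          rw [hs'sp] at hΨ1'sub
          have ht'sp : M.space t' = Ψ1' := hΨ1' t' ht'
          -- Ψ1' ⊆ Ψ2
          have ht0Up : t0 ∈ M.kUp i (M.proj s Ψ') :=
            hpi i s Ψ' hsub ⟨t0, ht0, subset_refl _, proj_self M t0⟩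
          obtain ⟨u0, hu0, hu0sub, _⟩ := ht0Up
          have hΨ1'Ψ2 : Ψ1' ⊆ Ψ2 := by
            rw [← hΨ1' u0 hu0, ← hΨ2 t0 ht0]
            exact hu0sub
          -- Ψc := Ψ2 ∩ Ψ' ⊆ Ψ1'
          have hΨcΨ2 : Ψ2 ∩ Ψ' ⊆ Ψ2 := Set.inter_subset_left
          have hΨcΨ' : Ψ2 ∩ Ψ' ⊆ Ψ' := Set.inter_subset_right
          have hpkc := hpk i s (Ψ2 ∩ Ψ') Ψ2 hΨcΨ2 hΨ2sub hΨ2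
          have ht'Up : t' ∈ M.kUp i (M.proj s Ψ') := ⟨t', ht', subset_refl _, proj_self M t'⟩
          obtain ⟨w, hw, hwsub, hweq⟩ :=
            hpi i (M.proj s Ψ') (Ψ2 ∩ Ψ') (by rw [hs'sp]; exact hΨcΨ') ht'Up
          have hpc : M.proj (M.proj s Ψ') (Ψ2 ∩ Ψ') = M.proj s (Ψ2 ∩ Ψ') :=
            M.proj_comp s (Ψ2 ∩ Ψ') Ψ' hΨcΨ' hsub
          rw [hpc, ← hpkc] at hw
          obtain ⟨t1, ht1, rfl⟩ := hw
          have hwsp : M.space (M.proj t1 (Ψ2 ∩ Ψ')) = Ψ2 ∩ Ψ' :=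
            M.proj_space t1 (Ψ2 ∩ Ψ') (by rw [hΨ2 t1 ht1]; exact hΨcΨ2)
          have hΨcΨ1' : Ψ2 ∩ Ψ' ⊆ Ψ1' := by
            rw [← hwsp, ← ht'sp]
            exact hwsub
          have hΨ1'eq : Ψ1' = Ψ2 ∩ Ψ' :=
            subset_antisymm (Set.subset_inter hΨ1'Ψ2 hΨ1'sub) hΨcΨ1'
          -- k i (proj s Ψ') = proj to Ψ1' of k i s
          have hpk1 := hpk i s Ψ1' Ψ2 hΨ1'Ψ2 hΨ2sub hΨ2
          have hpk2 := hpk i (M.proj s Ψ') Ψ1' Ψ1' (subset_refl _)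
            (by rw [hs'sp]; exact hΨ1'sub) hΨ1'
          have himg : (fun u => M.proj u Ψ1') '' M.k i (M.proj s Ψ') = M.k i (M.proj s Ψ') := by
            apply Set.Subset.antisymm
            · rintro x ⟨u, hu, rfl⟩
              have : M.proj u Ψ1' = u := by rw [← hΨ1' u hu]; exact proj_self M u
              simpa [this] using hu
            · intro u hu
              refine ⟨u, hu, ?_⟩
              rw [← hΨ1' u hu]
              exact proj_self M u
          have hps1 : M.proj (M.proj s Ψ') Ψ1' = M.proj s Ψ1' :=
            M.proj_comp s Ψ1' Ψ' hΨ1'sub hsub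
          have ht'img : t' ∈ (fun u => M.proj u Ψ1') '' M.k i s := by
            rw [hpk1, ← hps1, ← hpk2, himg]
            exact ht'
          obtain ⟨t, ht, htproj⟩ := ht'img
          -- defined at t'
          have hprΨ' : φ.prims ⊆ Ψ' := by
            have := (defined_iff M φ hφ (M.proj s Ψ')).mp hD
            rwa [hs'sp] at this
          have hprΨ2 : φ.prims ⊆ Ψ2 := by
            have := (defined_iff M φ hφ t0).mp (Or.inl (hAll t0 ht0))
            rwa [hΨ2 t0 ht0] at this
          have hDt' : (M.satp φ t').1 ∨ (M.satp φ t').2 := by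
            rw [defined_iff M φ hφ t', ht'sp, hΨ1'eq]
            exact Set.subset_inter hprΨ2 hprΨ'
          rcases hDt' with h | h
          · exact h
          · exfalso
            have hmono := (ih hφ t Ψ1' (by rw [hΨ2 t ht]; exact hΨ1'Ψ2)).2
            rw [show M.proj t Ψ1' = t' from htproj] at hmono
            exact satp_consistent M φ t ⟨hAll t ht, hmono h⟩
        · exfalso
          have hempty : M.k i s = ∅ := Set.not_nonempty_iff_eq_empty.mp hne
          have := hpk i s Ψ' (M.space s) hsub (subset_refl _)
            (by rw [hempty]; simp)
          rw [hempty, Set.image_empty] at this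
          rw [← this] at ht'
          exact ht'

end Aux

/-- Truth of `L^K_n(Φ)` formulas is monotone under projections: if `s' = ρ_{Ψ,Ψ'}(s)`
and `(M,s') ⊨ φ`, then `(M,s) ⊨ φ`. -/
theorem sat_of_sat_proj {α : Type} {n : ℕ} (M : HMS α n)
    (hconf : M.Confined) (hpk : M.ProjKnow) (hpi : M.ProjIgn)
    (Ψ' Ψ : Set α) (hΨ : Ψ' ⊆ Ψ) (s : M.State) (hs : M.space s = Ψ)
    (φ : Form α n) (hφ : φ.ImpFree)
    (hsat : M.Sat (M.proj s Ψ') φ) :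
    M.Sat s φ := by
  have hsub : Ψ' ⊆ M.space s := hs ▸ hΨ
  exact (satp_mono M hconf hpk hpi φ hφ s Ψ' hsub).1 hsat
end

section
/- Given an HMS structure M in H_n^C(Φ) (satisfying confinedness, projections preserve knowledge and ignorance, and the conditions corresponding to C ⊆ {r,t,e}), there exists an awareness structure M' on the same state set whose awareness is generated by primitive propositions and whose possibility correspondences satisfy the conditions in C, such that for all φ ∈ L^K_n(Φ), if s ∈ S_Ψ and all primitive propositions of φ lie in Ψ, then (M,s) ⊨ φ iff (M',s) ⊨ φ_X, where φ_X replaces each K_i by X_i. -/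
/-- An awareness structure for `n` agents over `α`, with state set `S`. -/
structure Aw (α : Type) (n : ℕ) (S : Type) where
  pi : S → α → Bool
  k : Fin n → S → Set S
  aw : Fin n → S → Set (Form α n)

namespace Aw

/-- Satisfaction where the modality `know i` of `L^K_n` is read as *explicit
knowledge* `X_i` (i.e. this evaluates the translation `φ_X` of a formula `φ`):
`X_i ψ` holds iff `ψ ∈ A_i(s)` and `ψ` holds at all `K_i`-successors. -/
def xsat {α : Type} {n : ℕ} {S : Type} (M : Aw α n S) : Form α n → S → Prop
  | .top => fun _ => True
  | .prim p => fun s => M.pi s p = true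
  | .neg φ => fun s => ¬ xsat M φ s
  | .and φ ψ => fun s => xsat M φ s ∧ xsat M ψ s
  | .imp φ ψ => fun s => xsat M φ s → xsat M ψ s
  | .know i φ => fun s => φ ∈ M.aw i s ∧ ∀ t ∈ M.k i s, xsat M φ t

/-- Awareness is generated by primitive propositions. -/
def PropGen {α : Type} {n : ℕ} {S : Type} (M : Aw α n S) : Prop :=
  ∀ (i : Fin n) (s : S) (φ : Form α n),
    φ ∈ M.aw i s ↔ ∀ p ∈ φ.prims, Form.prim p ∈ M.aw i s

/-- Agents know what they are aware of. -/
def KnowsAw {α : Type} {n : ℕ} {S : Type} (M : Aw α n S) : Prop :=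
  ∀ (i : Fin n) (s t : S), t ∈ M.k i s → M.aw i t = M.aw i s

end Aw


namespace HMS

variable {α : Type} {n : ℕ} (M : HMS α n)

lemma defined_of_prims : ∀ (φ : Form α n), φ.ImpFree → ∀ s : M.State,
    φ.prims ⊆ M.space s → M.Defined s φ := by
  intro φ
  induction φ with
  | top => intro _ s _; left; trivial
  | prim p =>
      intro _ s hsub
      have hp : p ∈ M.space s := hsub (by simp [Form.prims])
      have : (M.pi s p).isSome := (M.pi_def s p).2 hp
      rcases hb : M.pi s p with _ | b
      · rw [hb] at this; simp at this
      · cases b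
        · right; simpa [Defined, Sat, SatN, satp] using hb
        · left; simpa [Defined, Sat, SatN, satp] using hb
  | neg φ ih =>
      intro hf s hsub
      have := ih hf s hsub
      rcases this with h | h
      · right; exact h
      · left; exact h
  | and φ ψ ihφ ihψ =>
      intro hf s hsub
      have h1 := ihφ hf.1 s (fun p hp => hsub (Or.inl hp))
      have h2 := ihψ hf.2 s (fun p hp => hsub (Or.inr hp))
      rcases h1 with h1 | h1 <;> rcases h2 with h2 | h2
      · exact Or.inl ⟨h1, h2⟩
      · exact Or.inr (Or.inr (Or.inl ⟨h1, h2⟩))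
      · exact Or.inr (Or.inl ⟨h1, h2⟩)
      · exact Or.inr (Or.inr (Or.inr ⟨h1, h2⟩))
  | imp φ ψ _ _ => intro hf; exact absurd hf (by simp [Form.ImpFree])
  | know i φ ih =>
      intro hf s hsub
      have hd : (satp M φ s).1 ∨ (satp M φ s).2 := ih hf s hsub
      by_cases h : M.Sat s (.know i φ)
      · exact Or.inl h
      · right
        exact ⟨hd, by simpa [Sat, satp] using h⟩

lemma consistent : ∀ (φ : Form α n), φ.ImpFree → ∀ s : M.State,
    ¬ ((satp M φ s).1 ∧ (satp M φ s).2) := by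
  intro φ
  induction φ with
  | top => intro _ s h; exact h.2
  | prim p =>
      intro _ s h
      have := h.1.symm.trans h.2
      simp at this
  | neg φ ih => intro hf s h; exact ih hf s ⟨h.2, h.1⟩
  | and φ ψ ihφ ihψ =>
      intro hf s h
      rcases h.2 with h2 | h2 | h2
      · exact ihφ hf.1 s ⟨h.1.1, h2.1⟩
      · exact ihψ hf.2 s ⟨h.1.2, h2.2⟩
      · exact ihφ hf.1 s ⟨h.1.1, h2.1⟩
  | imp φ ψ _ _ => intro hf; exact absurd hf (by simp [Form.ImpFree])
  | know i φ ih => intro hf s h; exact h.2.2 h.1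

lemma satN_iff_not_sat {φ : Form α n} (hf : φ.ImpFree) {s : M.State}
    (hsub : φ.prims ⊆ M.space s) : M.SatN s φ ↔ ¬ M.Sat s φ := by
  constructor
  · intro h hs; exact M.consistent φ hf s ⟨hs, h⟩
  · intro h
    rcases M.defined_of_prims φ hf s hsub with h' | h'
    · exact absurd h' h
    · exact h'

lemma prims_of_defined : ∀ (φ : Form α n), φ.ImpFree → ∀ s : M.State,
    M.Defined s φ → φ.prims ⊆ M.space s := by
  intro φ
  induction φ with
  | top => intro _ s _; simp [Form.prims]
  | prim p =>
      intro _ s hd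
      have : (M.pi s p).isSome := by
        rcases hd with h | h <;> simp [Sat, SatN, satp] at h <;> simp [h]
      intro q hq
      simp [Form.prims] at hq
      rw [hq]
      exact (M.pi_def s p).1 this
  | neg φ ih =>
      intro hf s hd
      exact ih hf s (Or.symm hd)
  | and φ ψ ihφ ihψ =>
      intro hf s hd
      have : M.Defined s φ ∧ M.Defined s ψ := by
        rcases hd with h | h | h | h
        · exact ⟨Or.inl h.1, Or.inl h.2⟩
        · exact ⟨Or.inr h.1, Or.inl h.2⟩
        · exact ⟨Or.inl h.1, Or.inr h.2⟩
        · exact ⟨Or.inr h.1, Or.inr h.2⟩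
      intro p hp
      rcases hp with hp | hp
      · exact ihφ hf.1 s this.1 hp
      · exact ihψ hf.2 s this.2 hp
  | imp φ ψ _ _ => intro hf; exact absurd hf (by simp [Form.ImpFree])
  | know i φ ih =>
      intro hf s hd
      have : M.Defined s φ := by
        rcases hd with h | h
        · exact h.1
        · exact h.1
      exact ih hf s this

end HMS

namespace HMS

variable {α : Type} {n : ℕ} (M : HMS α n)

lemma k_proj_empty (hpk : M.ProjKnow) {i : Fin n} {s : M.State} {Ψ : Set α}
    (hΨ : Ψ ⊆ M.space s) (h : M.k i s = ∅) : M.k i (M.proj s Ψ) = ∅ := by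
  have := hpk i s Ψ (M.space s) hΨ (subset_refl _) (by simp [h])
  rw [← this, h]
  simp

lemma k_proj_nonempty (hconf : M.Confined) (hpk : M.ProjKnow) (hpi : M.ProjIgn)
    {i : Fin n} {s : M.State} {Ψ Ψ2 : Set α}
    (hΨ : Ψ ⊆ M.space s) (hne : (M.k i s).Nonempty)
    (hΨ2a : Ψ2 ⊆ M.space s) (hΨ2 : ∀ t ∈ M.k i s, M.space t = Ψ2) :
    (M.k i (M.proj s Ψ)).Nonempty ∧
    (∀ u ∈ M.k i (M.proj s Ψ), M.space u = Ψ ∩ Ψ2) ∧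
    (fun t => M.proj t (Ψ ∩ Ψ2)) '' M.k i (M.proj s Ψ)
      = (fun t => M.proj t (Ψ ∩ Ψ2)) '' M.k i s := by
  classical
  set s' := M.proj s Ψ with hs'
  have hsps' : M.space s' = Ψ := M.proj_space s Ψ hΨ
  obtain ⟨t, ht⟩ := hne
  have hst : M.space t = Ψ2 := hΨ2 t ht
  obtain ⟨x, hxsp, hxproj⟩ := M.proj_surj t Ψ2 (by rw [hst])
  have hxup : x ∈ M.kUp i s := ⟨t, ht, le_of_eq (hst.trans hxsp.symm), hxproj⟩
  have hx' : x ∈ M.kUp i s' := hpi i s Ψ hΨ hxup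
  obtain ⟨u0, hu0, hu0sub, hu0proj⟩ := hx'
  -- common space of K i s'
  obtain ⟨Ψ3, hΨ3sub, hΨ3⟩ := hconf i s'
  have hu0sp : M.space u0 = Ψ3 := hΨ3 u0 hu0
  have hΨ3Ψ : Ψ3 ⊆ Ψ := by rw [← hsps']; exact hΨ3sub
  have hΨ3Ψ2 : Ψ3 ⊆ Ψ2 := by rw [← hu0sp, ← hxsp]; exact hu0sub
  set Ψ0 := Ψ ∩ Ψ2 with hΨ0
  have hΨ0Ψ2 : Ψ0 ⊆ Ψ2 := Set.inter_subset_right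
  have hΨ0Ψ : Ψ0 ⊆ Ψ := Set.inter_subset_left
  -- image characterization at s
  have himg : (fun t => M.proj t Ψ0) '' M.k i s = M.k i (M.proj s Ψ0) :=
    hpk i s Ψ0 Ψ2 hΨ0Ψ2 hΨ2a hΨ2
  have hspimg : ∀ v ∈ M.k i (M.proj s Ψ0), M.space v = Ψ0 := by
    intro v hv
    rw [← himg] at hv
    obtain ⟨w, hw, rfl⟩ := hv
    exact M.proj_space w Ψ0 (by rw [hΨ2 w hw]; exact hΨ0Ψ2)
  have hprojcomp : M.proj s' Ψ0 = M.proj s Ψ0 := M.proj_comp s Ψ0 Ψ hΨ0Ψ hΨ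
  -- Ψ0 ⊆ Ψ3
  obtain ⟨y, hysp, hyproj⟩ := M.proj_surj u0 Ψ3 (by rw [hu0sp])
  have hyup : y ∈ M.kUp i s' := ⟨u0, hu0, le_of_eq (hu0sp.trans hysp.symm), hyproj⟩
  have hy' : y ∈ M.kUp i (M.proj s' Ψ0) :=
    hpi i s' Ψ0 (by rw [hsps']; exact hΨ0Ψ) hyup
  obtain ⟨v, hv, hvsub, -⟩ := hy'
  rw [hprojcomp] at hv
  have hvsp : M.space v = Ψ0 := hspimg v hv
  have hΨ0Ψ3 : Ψ0 ⊆ Ψ3 := by rw [← hvsp, ← hysp]; exact hvsub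
  have hΨ3eq : Ψ3 = Ψ0 := le_antisymm (Set.subset_inter hΨ3Ψ hΨ3Ψ2) hΨ0Ψ3
  refine ⟨⟨u0, hu0⟩, ?_, ?_⟩
  · intro u hu; rw [hΨ3 u hu, hΨ3eq]
  · have himg' : (fun t => M.proj t Ψ0) '' M.k i s' = M.k i (M.proj s' Ψ0) := by
      refine hpk i s' Ψ0 Ψ3 ?_ ?_ hΨ3
      · rw [hΨ3eq]
      · rw [hsps']; exact hΨ3Ψ
    rw [himg', hprojcomp, ← himg]

end HMS

namespace HMS

variable {α : Type} {n : ℕ} (M : HMS α n)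

lemma sat_know_iff {i : Fin n} {ψ : Form α n} (hf : ψ.ImpFree) {x : M.State}
    (hx : ψ.prims ⊆ M.space x) :
    M.Sat x (.know i ψ) ↔ ∀ t ∈ M.k i x, M.Sat t ψ := by
  have hd : M.Defined x ψ := M.defined_of_prims ψ hf x hx
  simp only [Sat, satp]
  exact and_iff_right hd

lemma proj_sat (hconf : M.Confined) (hpk : M.ProjKnow) (hpi : M.ProjIgn) :
    ∀ (φ : Form α n), φ.ImpFree → ∀ (s : M.State) (Ψ : Set α),
      φ.prims ⊆ Ψ → Ψ ⊆ M.space s → (M.Sat (M.proj s Ψ) φ ↔ M.Sat s φ) := by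
  intro φ
  induction φ with
  | top => intro _ s Ψ _ _; simp [Sat, satp]
  | prim p =>
      intro _ s Ψ hpr hΨ
      have hp : p ∈ Ψ := hpr (by simp [Form.prims])
      simp only [Sat, satp]
      rw [M.proj_pi s Ψ p hΨ hp]
  | neg φ ihφ =>
      intro hf s Ψ hpr hΨ
      have h1 : M.Sat (M.proj s Ψ) (.neg φ) ↔ ¬ M.Sat (M.proj s Ψ) φ :=
        M.satN_iff_not_sat (φ := φ) hf (by rw [M.proj_space s Ψ hΨ]; exact hpr)
      have h2 : M.Sat s (.neg φ) ↔ ¬ M.Sat s φ :=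
        M.satN_iff_not_sat (φ := φ) hf (hpr.trans hΨ)
      rw [h1, h2, ihφ hf s Ψ hpr hΨ]
  | and φ ψ ihφ ihψ =>
      intro hf s Ψ hpr hΨ
      have hφ : φ.prims ⊆ Ψ := fun p hp => hpr (Set.mem_union_left _ hp)
      have hψ : ψ.prims ⊆ Ψ := fun p hp => hpr (Set.mem_union_right _ hp)
      simp only [Sat, satp]
      exact and_congr (ihφ hf.1 s Ψ hφ hΨ) (ihψ hf.2 s Ψ hψ hΨ)
  | imp φ ψ _ _ => intro hf; exact absurd hf (by simp [Form.ImpFree])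
  | know j ψ ih =>
      intro hf s Ψ hpr hΨ
      have hfψ : ψ.ImpFree := hf
      have hprψ : ψ.prims ⊆ Ψ := hpr
      have hsps' : M.space (M.proj s Ψ) = Ψ := M.proj_space s Ψ hΨ
      rw [M.sat_know_iff hfψ (by rw [hsps']; exact hprψ),
        M.sat_know_iff hfψ (hprψ.trans hΨ)]
      by_cases hne : (M.k j s).Nonempty
      · obtain ⟨Ψ2, hΨ2a, hΨ2⟩ := hconf j s
        obtain ⟨hne', hsp', himg⟩ := M.k_proj_nonempty hconf hpk hpi hΨ hne hΨ2a hΨ2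
        by_cases hsub : ψ.prims ⊆ Ψ ∩ Ψ2
        · have h1 : (∀ t ∈ M.k j (M.proj s Ψ), M.Sat t ψ) ↔
              (∀ v ∈ (fun t => M.proj t (Ψ ∩ Ψ2)) '' M.k j (M.proj s Ψ), M.Sat v ψ) := by
            constructor
            · rintro h v ⟨t, ht, rfl⟩
              exact (ih hfψ t (Ψ ∩ Ψ2) hsub (le_of_eq (hsp' t ht).symm)).mpr (h t ht)
            · intro h t ht
              exact (ih hfψ t (Ψ ∩ Ψ2) hsub (le_of_eq (hsp' t ht).symm)).mp
                (h _ ⟨t, ht, rfl⟩)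
          have h2 : (∀ t ∈ M.k j s, M.Sat t ψ) ↔
              (∀ v ∈ (fun t => M.proj t (Ψ ∩ Ψ2)) '' M.k j s, M.Sat v ψ) := by
            constructor
            · rintro h v ⟨t, ht, rfl⟩
              exact (ih hfψ t (Ψ ∩ Ψ2) hsub
                (by rw [hΨ2 t ht]; exact Set.inter_subset_right)).mpr (h t ht)
            · intro h t ht
              exact (ih hfψ t (Ψ ∩ Ψ2) hsub
                (by rw [hΨ2 t ht]; exact Set.inter_subset_right)).mp (h _ ⟨t, ht, rfl⟩)
          rw [h1, h2, himg]
        · have hL : ¬ (∀ t ∈ M.k j (M.proj s Ψ), M.Sat t ψ) := by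
            intro h
            obtain ⟨u0, hu0⟩ := hne'
            have hh := M.prims_of_defined ψ hfψ u0 (Or.inl (h u0 hu0))
            rw [hsp' u0 hu0] at hh
            exact hsub hh
          have hR : ¬ (∀ t ∈ M.k j s, M.Sat t ψ) := by
            intro h
            obtain ⟨t, ht⟩ := hne
            have hh := M.prims_of_defined ψ hfψ t (Or.inl (h t ht))
            rw [hΨ2 t ht] at hh
            exact hsub (Set.subset_inter hprψ hh)
          simp [hL, hR]
      · have he' : M.k j s = ∅ := Set.not_nonempty_iff_eq_empty.mp hne
        rw [M.k_proj_empty hpk hΨ he', he']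

end HMS

lemma main_equiv {α : Type} {n : ℕ} {M : HMS α n} (M' : Aw α n M.State)
    (hpi' : ∀ (s : M.State) (p : α), p ∈ M.space s →
      (M'.pi s p = true ↔ M.pi s p = some true))
    (hknow : ∀ (i : Fin n) (φ : Form α n) (s : M.State), φ.ImpFree →
      φ.prims ⊆ M.space s →
      (∀ t : M.State, φ.prims ⊆ M.space t → (M.Sat t φ ↔ M'.xsat φ t)) →
      ((∀ t ∈ M.k i s, M.Sat t φ) ↔ (φ ∈ M'.aw i s ∧ ∀ t ∈ M'.k i s, M'.xsat φ t))) :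
    ∀ (φ : Form α n) (s : M.State), φ.ImpFree → φ.prims ⊆ M.space s →
      (M.Sat s φ ↔ M'.xsat φ s) := by
  intro φ
  induction φ with
  | top => intro s _ _; simp [HMS.Sat, HMS.satp, Aw.xsat]
  | prim p =>
      intro s _ hsub
      have hp : p ∈ M.space s := hsub (by simp [Form.prims])
      simp only [HMS.Sat, HMS.satp, Aw.xsat]
      exact (hpi' s p hp).symm
  | neg φ ih =>
      intro s hf hsub
      have h1 : M.Sat s (.neg φ) ↔ ¬ M.Sat s φ := M.satN_iff_not_sat (φ := φ) hf hsub
      rw [h1]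
      exact not_congr (ih s hf hsub)
  | and φ ψ ihφ ihψ =>
      intro s hf hsub
      have hφ : φ.prims ⊆ M.space s := fun p hp => hsub (Set.mem_union_left _ hp)
      have hψ : ψ.prims ⊆ M.space s := fun p hp => hsub (Set.mem_union_right _ hp)
      exact and_congr (ihφ s hf.1 hφ) (ihψ s hf.2 hψ)
  | imp φ ψ _ _ => intro s hf; exact absurd hf (by simp [Form.ImpFree])
  | know i φ ih =>
      intro s hf hsub
      rw [M.sat_know_iff (i := i) (ψ := φ) hf hsub]
      exact hknow i φ s hf hsub (fun t ht => ih t hf ht)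

/-- Theorem 3.2(a): from an HMS structure in `H_n^C(Φ)` one can build an awareness
structure on the same states, with awareness generated by primitive propositions and
possibility correspondences satisfying the conditions in `C`, agreeing with the HMS
structure in the sense that for `φ ∈ L^K_n(Φ)`, if `s ∈ S_Ψ` and `Φ_φ ⊆ Ψ` then
`(M,s) ⊨ φ` iff `(M',s) ⊨ φ_X`. -/
theorem hms_to_awareness {α : Type} {n : ℕ} (M : HMS α n)
    (hconf : M.Confined) (hpk : M.ProjKnow) (hpi : M.ProjIgn)
    (cr ct ce : Prop)
    (hr : cr → M.GenRefl) (ht : ct → M.StatA) (he : ce → M.StatB) :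
    ∃ M' : Aw α n M.State,
      M'.PropGen ∧
      (cr → ∀ (i : Fin n) (s : M.State), s ∈ M'.k i s) ∧
      (ct → ∀ (i : Fin n) (s t : M.State), t ∈ M'.k i s → M'.k i t ⊆ M'.k i s) ∧
      (ce → ∀ (i : Fin n) (s t : M.State), t ∈ M'.k i s → M'.k i s ⊆ M'.k i t) ∧
      (∀ (φ : Form α n) (s : M.State), φ.ImpFree → φ.prims ⊆ M.space s →
        (M.Sat s φ ↔ M'.xsat φ s)) := by
  classical
  let Ψi : Fin n → M.State → Set α := fun i s => (hconf i s).choose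
  have hΨa : ∀ i s, Ψi i s ⊆ M.space s := fun i s => (hconf i s).choose_spec.1
  have hΨb : ∀ i s, ∀ t ∈ M.k i s, M.space t = Ψi i s :=
    fun i s => (hconf i s).choose_spec.2
  let B : Fin n → M.State → Set α := fun i s =>
    if (M.k i s).Nonempty then Ψi i s else M.space s
  let pi' : M.State → α → Bool := fun s p => (M.pi s p).getD false
  have hpiB : ∀ (s : M.State) (p : α), p ∈ M.space s →
      (pi' s p = true ↔ M.pi s p = some true) := by
    intro s p hp
    have hs : (M.pi s p).isSome := (M.pi_def s p).2 hp
    rcases h : M.pi s p with _ | b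
    · rw [h] at hs; simp at hs
    · cases b <;> simp [pi', h]
  have hPG : ∀ (k' : Fin n → M.State → Set M.State),
      (Aw.mk pi' k' (fun i s => {φ | φ.prims ⊆ B i s})).PropGen := by
    intro k' i s φ
    show φ.prims ⊆ B i s ↔ ∀ p ∈ φ.prims, Form.prims (Form.prim p) ⊆ B i s
    simp [Form.prims, Set.subset_def]
  by_cases hcr : cr
  · -- cr holds
    have hGR := hr hcr
    have hKne : ∀ (i : Fin n) (s : M.State), (M.k i s).Nonempty := by
      intro i s; obtain ⟨t, ht', -, -⟩ := hGR i s; exact ⟨t, ht'⟩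
    have hBr : ∀ i s, B i s = Ψi i s := fun i s => if_pos (hKne i s)
    have ht0 : ∀ (i : Fin n) (s : M.State), M.proj s (Ψi i s) ∈ M.k i s := by
      intro i s
      obtain ⟨t, ht', hsub', hproj⟩ := hGR i s
      have hst : M.space t = Ψi i s := hΨb i s t ht'
      rw [hst] at hproj
      rw [hproj]; exact ht'
    have hspt0 : ∀ (i : Fin n) (s : M.State), M.space (M.proj s (Ψi i s)) = Ψi i s :=
      fun i s => M.proj_space s (Ψi i s) (hΨa i s)
    have himg0 : ∀ (i : Fin n) (s : M.State),
        (fun t => M.proj t (Ψi i s)) '' M.k i s = M.k i (M.proj s (Ψi i s)) :=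
      fun i s => hpk i s (Ψi i s) (Ψi i s) (subset_refl _) (hΨa i s) (hΨb i s)
    have hspK0 : ∀ (i : Fin n) (s : M.State), ∀ w ∈ M.k i (M.proj s (Ψi i s)),
        M.space w = Ψi i s := by
      intro i s w hw
      rw [← himg0 i s] at hw
      obtain ⟨u, hu, rfl⟩ := hw
      exact M.proj_space u (Ψi i s) (le_of_eq (hΨb i s u hu).symm)
    have hproj0 : ∀ (i : Fin n) (s : M.State),
        M.proj (M.proj s (Ψi i s)) (Ψi i s) = M.proj s (Ψi i s) :=
      fun i s => M.proj_comp s (Ψi i s) (Ψi i s) (subset_refl _) (hΨa i s)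
    by_cases hce : ce
    · -- cr and ce: equivalence classes of g
      have hSB := he hce
      let g : Fin n → M.State → Set M.State := fun i s => M.k i (M.proj s (Ψi i s))
      have hF2 : ∀ (i : Fin n) (s : M.State), ∀ u ∈ M.k i s,
          M.k i u = M.k i (M.proj s (Ψi i s)) := by
        intro i s u hu
        have h1 : M.k i s ⊆ M.k i u := hSB i s u hu
        have h2 : M.k i s ⊆ M.k i (M.proj s (Ψi i s)) := hSB i s _ (ht0 i s)
        exact Set.Subset.antisymm (hSB i u _ (h1 (ht0 i s))) (hSB i _ u (h2 hu))
      have hF8 : ∀ (i : Fin n) (s : M.State), ∀ u ∈ M.k i s, g i u = g i s := by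
        intro i s u hu
        have ht00 : M.proj s (Ψi i s) ∈ M.k i (M.proj s (Ψi i s)) :=
          hSB i s _ (ht0 i s) (ht0 i s)
        have ht0u : M.proj s (Ψi i s) ∈ M.k i u := by rw [hF2 i s u hu]; exact ht00
        have hΨiu : Ψi i u = Ψi i s := by
          have h := hΨb i u _ ht0u
          rw [hspt0 i s] at h
          exact h.symm
        have hspu : M.space u = Ψi i s := hΨb i s u hu
        show M.k i (M.proj u (Ψi i u)) = M.k i (M.proj s (Ψi i s))
        rw [hΨiu]
        have himgu : (fun t => M.proj t (Ψi i s)) '' M.k i u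
            = M.k i (M.proj u (Ψi i s)) :=
          hpk i u (Ψi i s) (Ψi i s) (subset_refl _) (le_of_eq hspu.symm)
            (by intro t ht'; rw [hF2 i s u hu] at ht'; exact hspK0 i s t ht')
        have himgt0 : (fun t => M.proj t (Ψi i s)) '' M.k i (M.proj s (Ψi i s))
            = M.k i (M.proj (M.proj s (Ψi i s)) (Ψi i s)) :=
          hpk i _ (Ψi i s) (Ψi i s) (subset_refl _) (le_of_eq (hspt0 i s).symm)
            (hspK0 i s)
        rw [← himgu, hF2 i s u hu, himgt0, hproj0 i s]
      have hF9 : ∀ (i : Fin n) (s t : M.State), g i t = g i s →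
          Ψi i s ⊆ M.space t ∧ M.proj t (Ψi i s) ∈ M.k i (M.proj s (Ψi i s)) := by
        intro i s t hgt
        have ht' : M.proj t (Ψi i t) ∈ M.k i t := ht0 i t
        have ht'' : M.proj t (Ψi i t) ∈ M.k i (M.proj t (Ψi i t)) := hSB i t _ ht' ht'
        have ht''' : M.proj t (Ψi i t) ∈ M.k i (M.proj s (Ψi i s)) := by
          rw [show M.k i (M.proj t (Ψi i t)) = M.k i (M.proj s (Ψi i s)) from hgt] at ht''
          exact ht''
        have hsp' : M.space (M.proj t (Ψi i t)) = Ψi i s := hspK0 i s _ ht'''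
        rw [hspt0 i t] at hsp'
        rw [hsp'] at ht'''
        exact ⟨hsp' ▸ hΨa i t, ht'''⟩
      refine ⟨⟨pi', fun i s => {t | g i t = g i s}, fun i s => {φ | φ.prims ⊆ B i s}⟩,
        hPG _, ?_, ?_, ?_, ?_⟩
      · intro _ i s; exact rfl
      · intro _ i s t hts x hx; exact hx.trans hts
      · intro _ i s t hts x hx; exact hx.trans hts.symm
      · refine main_equiv _ hpiB ?_
        intro i φ s hf hsub ih
        constructor
        · intro hall
          have hsat0 : M.Sat (M.proj s (Ψi i s)) φ := hall _ (ht0 i s)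
          have hpr2 : φ.prims ⊆ Ψi i s := by
            have h := M.prims_of_defined φ hf _ (Or.inl hsat0)
            rw [hspt0 i s] at h; exact h
          refine ⟨by show φ.prims ⊆ B i s; rw [hBr i s]; exact hpr2, ?_⟩
          intro t hgt
          obtain ⟨hΨ2t, ht'K⟩ := hF9 i s t hgt
          rw [← himg0 i s] at ht'K
          obtain ⟨u, hu, hequ⟩ := ht'K
          have hequ' : M.proj u (Ψi i s) = M.proj t (Ψi i s) := hequ
          have hspu : M.space u = Ψi i s := hΨb i s u hu
          have h1 : M.Sat (M.proj u (Ψi i s)) φ :=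
            (M.proj_sat hconf hpk hpi φ hf u (Ψi i s) hpr2
              (le_of_eq hspu.symm)).mpr (hall u hu)
          rw [hequ'] at h1
          have hsatt : M.Sat t φ :=
            (M.proj_sat hconf hpk hpi φ hf t (Ψi i s) hpr2 hΨ2t).mp h1
          exact (ih t (hpr2.trans hΨ2t)).mp hsatt
        · rintro ⟨haw, hall⟩
          have hpr2 : φ.prims ⊆ Ψi i s := by
            have h0 : φ.prims ⊆ B i s := haw
            rwa [hBr i s] at h0
          intro u hu
          exact (ih u (by rw [hΨb i s u hu]; exact hpr2)).mpr (hall u (hF8 i s u hu))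
    · -- cr and not ce: add s to K
      refine ⟨⟨pi', fun i s => insert s (M.k i s), fun i s => {φ | φ.prims ⊆ B i s}⟩,
        hPG _, ?_, ?_, ?_, ?_⟩
      · intro _ i s; exact Set.mem_insert s _
      · intro hct i s t hmem x hx
        have hSA := ht hct
        rcases Set.mem_insert_iff.mp hmem with rfl | hmem'
        · exact hx
        · rcases Set.mem_insert_iff.mp hx with rfl | hx'
          · exact Set.mem_insert_of_mem _ hmem'
          · exact Set.mem_insert_of_mem _ (hSA i s t hmem' hx')
      · intro hce'; exact absurd hce' hce
      · refine main_equiv _ hpiB ?_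
        intro i φ s hf hsub ih
        constructor
        · intro hall
          have hsat0 : M.Sat (M.proj s (Ψi i s)) φ := hall _ (ht0 i s)
          have hpr2 : φ.prims ⊆ Ψi i s := by
            have h := M.prims_of_defined φ hf _ (Or.inl hsat0)
            rw [hspt0 i s] at h; exact h
          refine ⟨by show φ.prims ⊆ B i s; rw [hBr i s]; exact hpr2, ?_⟩
          intro t htm
          rcases Set.mem_insert_iff.mp htm with rfl | htm'
          · have hsats : M.Sat t φ :=
              (M.proj_sat hconf hpk hpi φ hf t (Ψi i t) hpr2 (hΨa i t)).mp hsat0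
            exact (ih t (hpr2.trans (hΨa i t))).mp hsats
          · exact (ih t (by rw [hΨb i s t htm']; exact hpr2)).mp (hall t htm')
        · rintro ⟨haw, hall⟩
          have hpr2 : φ.prims ⊆ Ψi i s := by
            have h0 : φ.prims ⊆ B i s := haw
            rwa [hBr i s] at h0
          intro u hu
          exact (ih u (by rw [hΨb i s u hu]; exact hpr2)).mpr
            (hall u (Set.mem_insert_of_mem _ hu))
  · -- not cr: K' = K
    refine ⟨⟨pi', M.k, fun i s => {φ | φ.prims ⊆ B i s}⟩, hPG _, ?_, ?_, ?_, ?_⟩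
    · intro hcr'; exact absurd hcr' hcr
    · intro hct i s t; exact ht hct i s t
    · intro hce i s t; exact he hce i s t
    · refine main_equiv _ hpiB ?_
      intro i φ s hf hsub ih
      by_cases hne : (M.k i s).Nonempty
      · have hBr : B i s = Ψi i s := if_pos hne
        constructor
        · intro hall
          obtain ⟨t, ht'⟩ := hne
          have hpr2 : φ.prims ⊆ Ψi i s := by
            have h := M.prims_of_defined φ hf t (Or.inl (hall t ht'))
            rw [hΨb i s t ht'] at h; exact h
          refine ⟨by show φ.prims ⊆ B i s; rw [hBr]; exact hpr2, ?_⟩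
          intro u hu
          exact (ih u (by rw [hΨb i s u hu]; exact hpr2)).mp (hall u hu)
        · rintro ⟨haw, hall⟩
          have hpr2 : φ.prims ⊆ Ψi i s := by
            have h0 : φ.prims ⊆ B i s := haw
            rwa [hBr] at h0
          intro u hu
          exact (ih u (by rw [hΨb i s u hu]; exact hpr2)).mpr (hall u hu)
      · have hemp : M.k i s = ∅ := Set.not_nonempty_iff_eq_empty.mp hne
        have hBr : B i s = M.space s := if_neg hne
        constructor
        · intro _
          refine ⟨by show φ.prims ⊆ B i s; rw [hBr]; exact hsub, ?_⟩
          intro u hu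
          have hu' : u ∈ M.k i s := hu
          rw [hemp] at hu'
          exact absurd hu' (Set.notMem_empty u)
        · intro _ u hu
          have hu' : u ∈ M.k i s := hu
          rw [hemp] at hu'
          exact absurd hu' (Set.notMem_empty u)
end

section
/- Given an awareness structure M in N_n^{C,pd}(Φ) (awareness generated by primitive propositions and agents know what they are aware of, possibility correspondences satisfying C ⊆ {r,t,e}), the HMS structure M' with states Σ × 2^Φ, S_Ψ = Σ × {Ψ}, π'((s,Ψ),p) = π(s,p) if p ∈ Ψ and 1/2 otherwise, K'_i((s,Ψ)) = {(t, Ψ ∩ Ψ_i(s)) : t ∈ K_i(s)} where Ψ_i(s) = A_i(s) ∩ Φ, and ρ_{Ψ',Ψ}((s,Ψ')) = (s,Ψ), satisfies confinedness, projections preserve knowledge, and projections preserve ignorance. -/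
/-- The primitive propositions agent `i` is aware of at `s`: `Ψ_i(s) = A_i(s) ∩ Φ`. -/
def awPrims {α : Type} {n : ℕ} {S : Type} (M : Aw α n S) (i : Fin n) (s : S) : Set α :=
  {p | Form.prim p ∈ M.aw i s}

/-- The possibility correspondence of the constructed HMS structure on `Σ × 2^Φ`:
`K'_i((s,Ψ)) = {(t, Ψ ∩ Ψ_i(s)) : t ∈ K_i(s)}`. -/
def kP {α : Type} {n : ℕ} {S : Type} (M : Aw α n S) (i : Fin n) :
    S × Set α → Set (S × Set α) :=
  fun x => {y | ∃ t ∈ M.k i x.1, y = (t, x.2 ∩ awPrims M i x.1)}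

/-- The projection `ρ_{Ψ',Ψ}((s,Ψ')) = (s,Ψ)`. -/
def rhoP {α : Type} {S : Type} : S × Set α → Set α → S × Set α :=
  fun x Ψ => (x.1, Ψ)

/-- `B^↑` for a set `B` of states of the constructed structure (whose members all lie
in a common space): the states expressible from `B` via the projections. -/
def upP {α : Type} {S : Type} (B : Set (S × Set α)) : Set (S × Set α) :=
  {x | ∃ y ∈ B, y.2 ⊆ x.2 ∧ (x.1, y.2) ∈ B}

/-- Theorem 3.2(b), structural part: the HMS structure constructed from a
propositionally determined awareness structure (states `Σ × 2^Φ`, `S_Ψ = Σ × {Ψ}`,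
`K'_i((s,Ψ)) = {(t, Ψ ∩ Ψ_i(s)) : t ∈ K_i(s)}`, `ρ_{Ψ',Ψ}((s,Ψ')) = (s,Ψ)`)
satisfies confinedness, projections preserve knowledge, and projections preserve
ignorance. -/
theorem constructed_hms_conditions {α : Type} {n : ℕ} {S : Type} (M : Aw α n S)
    (hpg : M.PropGen) (hka : M.KnowsAw) :
    -- confinedness
    (∀ (i : Fin n) (x : S × Set α),
      ∃ Ψ'', Ψ'' ⊆ x.2 ∧ ∀ y ∈ kP M i x, y.2 = Ψ'') ∧
    -- projections preserve knowledge
    (∀ (i : Fin n) (s : S) (Ψ1 Ψ2 Ψ3 : Set α), Ψ1 ⊆ Ψ2 → Ψ2 ⊆ Ψ3 →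
      (∀ y ∈ kP M i (s, Ψ3), y.2 = Ψ2) →
      (fun y => rhoP y Ψ1) '' kP M i (s, Ψ3) = kP M i (rhoP (s, Ψ3) Ψ1)) ∧
    -- projections preserve ignorance
    (∀ (i : Fin n) (s : S) (Ψ Ψ' : Set α), Ψ ⊆ Ψ' →
      upP (kP M i (s, Ψ')) ⊆ upP (kP M i (rhoP (s, Ψ') Ψ))) := by
  refine ⟨?_, ?_, ?_⟩
  · intro i x
    exact ⟨x.2 ∩ awPrims M i x.1, Set.inter_subset_left,
      fun y hy => by obtain ⟨t, _, rfl⟩ := hy; rfl⟩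
  · intro i s Ψ1 Ψ2 Ψ3 h12 h23 hk
    ext y
    constructor
    · rintro ⟨z, ⟨t, ht, rfl⟩, rfl⟩
      have h2 : Ψ3 ∩ awPrims M i s = Ψ2 := hk _ ⟨t, ht, rfl⟩
      have h1 : Ψ1 ∩ awPrims M i s = Ψ1 :=
        Set.inter_eq_left.2 fun p hp => (h2.symm ▸ h12 hp : p ∈ Ψ3 ∩ _).2
      exact ⟨t, ht, by simp [rhoP, h1]⟩
    · rintro ⟨t, ht, rfl⟩
      have h2 : Ψ3 ∩ awPrims M i s = Ψ2 := hk _ ⟨t, ht, rfl⟩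
      have h1 : Ψ1 ∩ awPrims M i s = Ψ1 :=
        Set.inter_eq_left.2 fun p hp => (h2.symm ▸ h12 hp : p ∈ Ψ3 ∩ _).2
      exact ⟨(t, Ψ3 ∩ awPrims M i s), ⟨t, ht, rfl⟩, by simp [rhoP, h1]⟩
  · intro i s Ψ Ψ' hΨ x hx
    obtain ⟨y, ⟨t, ht, rfl⟩, hsub, hx1⟩ := hx
    obtain ⟨u, hu, hu2⟩ := hx1
    have hx1' : x.1 ∈ M.k i s := by
      have := congrArg Prod.fst hu2; simp at this; rwa [this]
    refine ⟨(t, Ψ ∩ awPrims M i s), ⟨t, ht, rfl⟩, ?_, ⟨x.1, hx1', rfl⟩⟩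
    exact fun p hp => hsub ⟨hΨ hp.1, hp.2⟩
end

section
/- In the construction of an HMS structure M' from a propositionally-determined awareness structure M (states Σ × 2^Φ, K'_i((s,Ψ)) = {(t, Ψ ∩ Ψ_i(s)) : t ∈ K_i(s)}): if K_i is reflexive then M' satisfies generalized reflexivity; if K_i is transitive then M' satisfies K'_i(x') ⊆ K'_i(x) whenever x' ∈ K'_i(x); if K_i is Euclidean then M' satisfies K'_i(x') ⊇ K'_i(x) whenever x' ∈ K'_i(x). -/
/-- In the construction of an HMS structure from a propositionally determined
awareness structure: reflexivity of `K_i` yields generalized reflexivity, transitivity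
yields stationarity part (a), and the Euclidean property yields stationarity part (b). -/
theorem constructed_hms_rte {α : Type} {n : ℕ} {S : Type} (M : Aw α n S)
    (hpg : M.PropGen) (hka : M.KnowsAw) (i : Fin n) :
    ((∀ s : S, s ∈ M.k i s) →
      ∀ x : S × Set α, x ∈ upP (kP M i x)) ∧
    ((∀ s t : S, t ∈ M.k i s → M.k i t ⊆ M.k i s) →
      ∀ x x' : S × Set α, x' ∈ kP M i x → kP M i x' ⊆ kP M i x) ∧
    ((∀ s t : S, t ∈ M.k i s → M.k i s ⊆ M.k i t) →
      ∀ x x' : S × Set α, x' ∈ kP M i x → kP M i x ⊆ kP M i x') := by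
  have hP : ∀ s t : S, t ∈ M.k i s → awPrims M i t = awPrims M i s := by
    intro s t ht
    unfold awPrims
    rw [hka i s t ht]
  refine ⟨?_, ?_, ?_⟩
  · intro hrefl x
    exact ⟨(x.1, x.2 ∩ awPrims M i x.1), ⟨x.1, hrefl x.1, rfl⟩,
      Set.inter_subset_left, ⟨x.1, hrefl x.1, rfl⟩⟩
  · intro htr x x' hx' y hy
    obtain ⟨t, ht, rfl⟩ := hx'
    obtain ⟨u, hu, rfl⟩ := hy
    refine ⟨u, htr _ _ ht hu, ?_⟩
    simp [hP _ _ ht, Set.inter_assoc]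
  · intro heuc x x' hx' y hy
    obtain ⟨t, ht, rfl⟩ := hx'
    obtain ⟨u, hu, rfl⟩ := hy
    refine ⟨u, heuc _ _ ht hu, ?_⟩
    simp [hP _ _ ht, Set.inter_assoc]
end

section
/- Axiom Conf2 is strongly valid in all HMS structures satisfying confinedness: for every formula φ, the formula ¬K_i(φ = 1/2) ↪ K_i((φ ∨ ¬φ) = 1) is true at every state. -/
section Aux

variable {α : Type} {n : ℕ}

/-- Definedness of a formula as determined by a set of defined primitives. -/
def definedIn (Ψ : Set α) : Form α n → Prop
  | .top => True
  | .prim p => p ∈ Ψ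
  | .neg φ => definedIn Ψ φ
  | .and φ ψ => definedIn Ψ φ ∧ definedIn Ψ ψ
  | .imp φ ψ => ¬ definedIn Ψ φ ∨ definedIn Ψ ψ
  | .know _ φ => definedIn Ψ φ

lemma defined_iff_definedIn (M : HMS α n) :
    ∀ (φ : Form α n) (t : M.State), M.Defined t φ ↔ definedIn (M.space t) φ := by
  intro φ
  induction φ with
  | top => intro t; simp [HMS.Defined, HMS.Sat, HMS.SatN, HMS.satp, definedIn]
  | prim p =>
      intro t
      have h := M.pi_def t p
      simp only [HMS.Defined, HMS.Sat, HMS.SatN, HMS.satp, definedIn]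
      constructor
      · rintro (h1 | h1) <;> rw [← h] <;> simp [h1]
      · intro hp
        rw [← h] at hp
        rcases ho : M.pi t p with _ | b
        · rw [ho] at hp; simp at hp
        · cases b
          · right; rfl
          · left; rfl
  | neg φ ih =>
      intro t
      simp only [HMS.Defined, HMS.Sat, HMS.SatN, HMS.satp, definedIn] at *
      rw [← ih t]; tauto
  | and φ ψ ihφ ihψ =>
      intro t
      have h1 := ihφ t; have h2 := ihψ t
      simp only [HMS.Defined, HMS.Sat, HMS.SatN, HMS.satp, definedIn] at *
      rw [← h1, ← h2]; tauto
  | imp φ ψ ihφ ihψ =>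
      intro t
      have h1 := ihφ t; have h2 := ihψ t
      simp only [HMS.Defined, HMS.Sat, HMS.SatN, HMS.satp, definedIn] at *
      rw [← h1, ← h2]; tauto
  | know i φ ih =>
      intro t
      have h1 := ih t
      simp only [HMS.Defined, HMS.Sat, HMS.SatN, HMS.satp, definedIn] at *
      rw [← h1]; tauto

/-- No formula is simultaneously true and false. -/
lemma not_both (M : HMS α n) : ∀ (φ : Form α n) (t : M.State),
    ¬ ((M.satp φ t).1 ∧ (M.satp φ t).2) := by
  intro φ
  induction φ with
  | top => intro t; simp [HMS.satp]
  | prim p =>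
      intro t; simp only [HMS.satp]
      rintro ⟨h1, h2⟩; rw [h1] at h2; simp at h2
  | neg φ ih => intro t; have := ih t; simp only [HMS.satp]; tauto
  | and φ ψ ihφ ihψ =>
      intro t; have h1 := ihφ t; have h2 := ihψ t
      simp only [HMS.satp]; tauto
  | imp φ ψ ihφ ihψ =>
      intro t; have h1 := ihφ t; have h2 := ihψ t
      simp only [HMS.satp]; tauto
  | know i φ ih => intro t; simp only [HMS.satp]; tauto

lemma satp_eqHalf_one (M : HMS α n) (φ : Form α n) (t : M.State) :
    (M.satp (eqHalf φ) t).1 ↔ ¬ M.Defined t φ := by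
  have h := not_both M φ t
  simp only [eqHalf, HMS.satp, HMS.Defined, HMS.Sat, HMS.SatN]
  tauto

lemma defined_eqHalf (M : HMS α n) (φ : Form α n) (t : M.State) :
    (M.satp (eqHalf φ) t).1 ∨ (M.satp (eqHalf φ) t).2 := by
  simp only [eqHalf, HMS.satp]
  tauto

lemma satp_eqOne_orF (M : HMS α n) (φ : Form α n) (t : M.State) :
    (M.satp (eqOne (orF φ (.neg φ))) t).1 ↔ M.Defined t φ := by
  simp only [eqOne, orF, HMS.satp, HMS.Defined, HMS.Sat, HMS.SatN]
  tauto

lemma defined_eqOne (M : HMS α n) (ψ : Form α n) (t : M.State) :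
    (M.satp (eqOne ψ) t).1 ∨ (M.satp (eqOne ψ) t).2 := by
  simp only [eqOne, HMS.satp]
  tauto

end Aux

/-- Axiom Conf2, `¬K_i(φ = 1/2) ↪ K_i((φ ∨ ¬φ) = 1)`, is strongly valid in all HMS
structures satisfying confinedness. -/
theorem Conf2_strongly_valid {α : Type} {n : ℕ} (M : HMS α n) (hconf : M.Confined)
    (i : Fin n) (φ : Form α n) (s : M.State) :
    M.Sat s (.imp (.neg (.know i (eqHalf φ))) (.know i (eqOne (orF φ (.neg φ))))) := by
  show (M.satp (.imp (.neg (.know i (eqHalf φ))) (.know i (eqOne (orF φ (.neg φ))))) s).1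
  by_cases hall : ∀ t ∈ M.k i s, ¬ M.Defined t φ
  · -- all states in K_i(s) leave φ undefined: antecedent is false, consequent defined
    refine Or.inr (Or.inr ?_)
    constructor
    · -- ¬K_i(φ=1/2) is false, i.e. K_i(φ=1/2) is true
      show (M.satp (.know i (eqHalf φ)) s).1
      simp only [HMS.satp]
      refine ⟨defined_eqHalf M φ s, fun t ht => ?_⟩
      exact (satp_eqHalf_one M φ t).mpr (hall t ht)
    · -- K_i((φ∨¬φ)=1) is defined
      show ((M.satp (.know i (eqOne (orF φ (.neg φ)))) s).1 ∨ _)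
      simp only [HMS.satp]
      have hd := defined_eqOne M (orF φ (.neg φ)) s
      tauto
  · -- some state in K_i(s) defines φ: by confinedness all do
    push_neg at hall
    obtain ⟨t₀, ht₀, hd₀⟩ := hall
    obtain ⟨Ψ', _, hsp⟩ := hconf i s
    have halld : ∀ t ∈ M.k i s, M.Defined t φ := by
      intro t ht
      rw [defined_iff_definedIn, hsp t ht]
      rw [defined_iff_definedIn, hsp t₀ ht₀] at hd₀
      exact hd₀
    refine Or.inl ⟨?_, ?_⟩
    · -- antecedent ¬K_i(φ=1/2) is true, i.e. K_i(φ=1/2) is false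
      show (M.satp (.know i (eqHalf φ)) s).2
      simp only [HMS.satp]
      refine ⟨defined_eqHalf M φ s, fun h => ?_⟩
      exact ((satp_eqHalf_one M φ t₀).mp (h.2 t₀ ht₀)) hd₀
    · -- consequent K_i((φ∨¬φ)=1) is true
      show (M.satp (.know i (eqOne (orF φ (.neg φ)))) s).1
      simp only [HMS.satp]
      refine ⟨defined_eqOne M (orF φ (.neg φ)) s, fun t ht => ?_⟩
      exact (satp_eqOne_orF M φ t).mpr (halld t ht)
end
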